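/- Let A, B, D partition [n] and f : 𝒳 → ℝ. The following are equivalent: (i) there exists a strictly positive joint probability P on 𝒳 × {−1,+1} satisfying the conditional independence X_A ⊥ X_B | (X_D, C) (i.e., the toric equations p(x_A,x_B,x_D,c)p(x_A',x_B',x_D,c) = p(x_A,x_B',x_D,c)p(x_A',x_B,x_D,c) for all arguments) and whose induced discrimination function ln(p(x,+1)/p(x,−1)) equals f; (ii) Δ_A Δ_B f ≡ 0. -/

import Mathlib

/-- The point agreeing with `x0` on coordinates in `A` and with `x` elsewhere. -/
def patch {n : ℕ} {X : Fin n → Type*} (A : Finset (Fin n)) (x0 x : ∀ i, X i) :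
    ∀ i, X i := fun i => if i ∈ A then x0 i else x i

/-- First-order `A`-difference of `f` centered at `x0`. -/
def Δ {n : ℕ} {X : Fin n → Type*} (A : Finset (Fin n)) (x0 : ∀ i, X i)
    (f : (∀ i, X i) → ℝ) : (∀ i, X i) → ℝ :=
  fun x => f x - f (patch A x0 x)

lemma patch_patch_union {n : ℕ} {X : Fin n → Type*} (A B : Finset (Fin n))
    (x0 x : ∀ i, X i) : patch B x0 (patch A x0 x) = patch (A ∪ B) x0 x := by
  funext i
  simp only [patch, Finset.mem_union]
  by_cases hb : i ∈ B <;> by_cases ha : i ∈ A <;> simp [hb, ha]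

lemma patch_absorb {n : ℕ} {X : Fin n → Type*} (A B : Finset (Fin n)) (hBA : B ⊆ A)
    (x0 x' x : ∀ i, X i) : patch A x0 (patch B x' x) = patch A x0 x := by
  funext i
  simp only [patch]
  by_cases ha : i ∈ A <;> by_cases hb : i ∈ B <;> simp [ha, hb]
  exact absurd (hBA hb) ha

lemma patch_outer {n : ℕ} {X : Fin n → Type*} (A B C : Finset (Fin n))
    (hA : ∀ i, i ∈ B ↔ (i ∉ A ∧ i ∈ C))
    (x0 x' x : ∀ i, X i) : patch A x0 (patch C x' x) = patch A x0 (patch B x' x) := by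
  funext i
  simp only [patch]
  by_cases ha : i ∈ A
  · simp [ha]
  · by_cases hc : i ∈ C
    · simp [ha, hc, (hA i).2 ⟨ha, hc⟩]
    · have hb : i ∉ B := fun h => hc ((hA i).1 h).2
      simp [ha, hc, hb]

/-- For a partition `A, B, D` of the predictor indices and `f : 𝒳 → ℝ`, the following
are equivalent: (i) there exists a strictly positive joint density `p` on `𝒳 × {−1,+1}`
(class encoded by `Bool`, `true ↦ +1`) summing to one, satisfying the conditional
independence `X_A ⊥ X_B | (X_D, C)` (toric equations), whose induced discrimination
function `ln (p(x,+1)/p(x,−1))` equals `f`; (ii) `Δ_A Δ_B f ≡ 0`. -/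
theorem stmt11 {n : ℕ} {X : Fin n → Type*} [∀ i, Fintype (X i)] [∀ i, Nonempty (X i)]
    [∀ i, DecidableEq (X i)]
    (A B D : Finset (Fin n))
    (hAB : Disjoint A B) (hAD : Disjoint A D) (hBD : Disjoint B D)
    (hcover : A ∪ B ∪ D = Finset.univ)
    (f : (∀ i, X i) → ℝ) (x0 : ∀ i, X i) :
    (∃ p : (∀ i, X i) → Bool → ℝ,
        (∀ x c, 0 < p x c) ∧
        (∑ x : ∀ i, X i, (p x true + p x false)) = 1 ∧
        (∀ (c : Bool) (x x' : ∀ i, X i),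
          p x c * p (patch (A ∪ B) x' x) c = p (patch B x' x) c * p (patch A x' x) c) ∧
        (∀ x, Real.log (p x true / p x false) = f x)) ↔
    (∀ x, Δ A x0 (Δ B x0 f) x = 0) := by
  classical
  constructor
  · rintro ⟨p, hpos, _, htor, hlog⟩
    have hf : ∀ x, f x = Real.log (p x true) - Real.log (p x false) := by
      intro x
      rw [← hlog x, Real.log_div (hpos x true).ne' (hpos x false).ne']
    have key : ∀ (c : Bool) (x : ∀ i, X i),
        Real.log (p x c) + Real.log (p (patch (A ∪ B) x0 x) c)
          = Real.log (p (patch B x0 x) c) + Real.log (p (patch A x0 x) c) := by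
      intro c x
      have h := congrArg Real.log (htor c x x0)
      rwa [Real.log_mul (hpos _ _).ne' (hpos _ _).ne',
        Real.log_mul (hpos _ _).ne' (hpos _ _).ne'] at h
    intro x
    simp only [Δ, patch_patch_union]
    have h1 := key true x
    have h2 := key false x
    rw [hf x, hf (patch A x0 x), hf (patch B x0 x), hf (patch (A ∪ B) x0 x)]
    linarith
  · intro h
    set S := ∑ x : ∀ i, X i, (Real.exp (f x) + 1) with hS
    have hSpos : 0 < S :=
      Finset.sum_pos (fun x _ => by positivity) Finset.univ_nonempty
    have h0 : ∀ y, f y = f (patch A x0 y) + f (patch B x0 y) - f (patch (A ∪ B) x0 y) := by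
      intro y
      have hy := h y
      simp only [Δ, patch_patch_union] at hy
      linarith
    have hadd : ∀ x x', f x + f (patch (A ∪ B) x' x)
        = f (patch B x' x) + f (patch A x' x) := by
      intro x x'
      have H1 := h0 x
      have H2 := h0 (patch A x' x)
      have H3 := h0 (patch B x' x)
      have H4 := h0 (patch (A ∪ B) x' x)
      rw [patch_absorb A A le_rfl, patch_absorb (A ∪ B) A Finset.subset_union_left] at H2
      rw [patch_absorb B B le_rfl, patch_absorb (A ∪ B) B Finset.subset_union_right] at H3
      rw [patch_absorb (A ∪ B) (A ∪ B) le_rfl,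
        patch_outer A B (A ∪ B) (fun i =>
          ⟨fun hb => ⟨fun ha => Finset.disjoint_left.mp hAB ha hb, Finset.mem_union_right _ hb⟩,
           fun hc => (Finset.mem_union.mp hc.2).resolve_left hc.1⟩),
        patch_outer B A (A ∪ B) (fun i =>
          ⟨fun ha => ⟨fun hb => Finset.disjoint_left.mp hAB ha hb, Finset.mem_union_left _ ha⟩,
           fun hc => (Finset.mem_union.mp hc.2).resolve_right hc.1⟩)] at H4
      linarith
    refine ⟨fun x c => if c then Real.exp (f x) / S else 1 / S, ?_, ?_, ?_, ?_⟩
    · intro x c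
      cases c <;> simp only [Bool.false_eq_true, ↓reduceIte] <;> exact div_pos (by positivity) hSpos
    · show (∑ x : ∀ i, X i, (Real.exp (f x) / S + 1 / S)) = 1
      have heq : (∑ x : ∀ i, X i, (Real.exp (f x) / S + 1 / S))
          = (∑ x : ∀ i, X i, (Real.exp (f x) + 1)) / S := by
        rw [Finset.sum_div]
        exact Finset.sum_congr rfl fun x _ => by ring
      rw [heq, ← hS, div_self hSpos.ne']
    · intro c x x'
      cases c
      · simp
      · show Real.exp (f x) / S * (Real.exp (f (patch (A ∪ B) x' x)) / S)
            = Real.exp (f (patch B x' x)) / S * (Real.exp (f (patch A x' x)) / S)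
        rw [div_mul_div_comm, div_mul_div_comm, ← Real.exp_add, ← Real.exp_add, hadd x x']
    · intro x
      show Real.log (Real.exp (f x) / S / (1 / S)) = f x
      have hx : Real.exp (f x) / S / (1 / S) = Real.exp (f x) := by
        field_simp
      rw [hx, Real.log_exp]
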